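/- arXiv:1711.02165 — 9 statements merged into one kernel-verified Lean document; each statement's English description precedes it below -/
import Mathlib

section
/- The sequence β_i is strictly increasing for 0 ≤ i ≤ n, i.e., β_{i+1} > β_i for all 0 ≤ i < n. -/
noncomputable def Sseq (n i : ℕ) : ℝ :=
  n + ∑ j ∈ Finset.range i, ((1 + 1 / (4 * (n : ℝ)))⁻¹) ^ j

noncomputable def beta (n i : ℕ) : ℝ :=
  (1 / (3 * (n : ℝ) + i)) *
    ((3 * (n : ℝ) - i) / 2 - ((n : ℝ) - i) / (1 + 1 / (4 * (n : ℝ))) ^ i + Sseq n i)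

theorem stmt_1 (n : ℕ) (hn : 1 ≤ n) (i : ℕ) (hi : i < n) :
    beta n i < beta n (i + 1) := by
  have hN : (1:ℝ) ≤ (n:ℝ) := by exact_mod_cast hn
  have hIN : (i:ℝ) + 1 ≤ (n:ℝ) := by exact_mod_cast hi
  have hI0 : (0:ℝ) ≤ (i:ℝ) := Nat.cast_nonneg i
  rw [beta, beta, Sseq, Sseq, Finset.sum_range_succ]
  push_cast
  set N := (n:ℝ) with hNdef
  set I := (i:ℝ) with hIdef
  have hN0 : (0:ℝ) < N := by linarith
  set a : ℝ := 1 / (4 * N) with hadef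
  have ha0 : 0 < a := by positivity
  have ha4 : a ≤ 1/4 := by
    rw [hadef, div_le_div_iff₀ (by linarith) (by norm_num)]
    linarith
  set l : ℝ := 1 + a with hldef
  have hl0 : (0:ℝ) < l := by linarith
  have hl1 : (1:ℝ) < l := by linarith
  have hm0 : (0:ℝ) < l⁻¹ := by positivity
  have hm1 : l⁻¹ ≤ 1 := inv_le_one_of_one_le₀ hl1.le
  have hma : 1 - a ≤ l⁻¹ := by
    rw [inv_eq_one_div, le_div_iff₀ hl0]
    nlinarith [sq_nonneg a]
  have hP : (3:ℝ)/4 ≤ l⁻¹ ^ i := by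
    have h1a0 : (0:ℝ) ≤ 1 - a := by linarith
    have h1 : 1 + (n:ℝ) * (-a) ≤ (1 + -a)^n := one_add_mul_le_pow (by linarith) n
    have hNa : N * a = 1/4 := by rw [hadef]; field_simp
    have h2 : (1-a)^n ≤ (l⁻¹)^n := pow_le_pow_left₀ h1a0 hma n
    have h3 : (l⁻¹)^n ≤ (l⁻¹)^i := pow_le_pow_of_le_one hm0.le hm1 hi.le
    have h4 : (1:ℝ) - N * a ≤ (1-a)^n := by
      rw [show (1:ℝ) - a = 1 + -a by ring]
      linarith
    linarith
  have hP1 : l⁻¹ ^ i ≤ 1 := pow_le_one₀ hm0.le hm1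
  set P : ℝ := l⁻¹ ^ i with hPdef
  set T : ℝ := ∑ j ∈ Finset.range i, l⁻¹ ^ j with hTdef
  have hT0 : (0:ℝ) ≤ T := Finset.sum_nonneg fun j _ => by positivity
  have hTI : T ≤ I := by
    rw [hTdef]
    calc ∑ j ∈ Finset.range i, l⁻¹ ^ j ≤ ∑ j ∈ Finset.range i, (1:ℝ) :=
          Finset.sum_le_sum fun j _ => pow_le_one₀ hm0.le hm1
      _ = I := by simp [hIdef]
  have hD1 : (0:ℝ) < 3 * N + I := by linarith
  have hD2 : (0:ℝ) < 3 * N + (I + 1) := by linarith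
  have hdiv1 : (N - I) / l ^ i = (N - I) * P := by
    rw [hPdef, inv_pow, div_eq_mul_inv]
  have hdiv2 : (N - (I + 1)) / l ^ (i + 1) = (N - I - 1) * (l⁻¹ * P) := by
    rw [hPdef, inv_pow, div_eq_mul_inv, ← inv_pow, pow_succ]
    ring
  rw [hdiv1, hdiv2, one_div_mul_eq_div, one_div_mul_eq_div,
    div_lt_div_iff₀ hD1 hD2]
  have hc0 : (0:ℝ) ≤ N - I - 1 := by linarith
  have h1m : (0:ℝ) ≤ 1 - l⁻¹ := by linarith
  nlinarith [mul_nonneg (mul_nonneg hc0 h1m) (by linarith : (0:ℝ) ≤ P),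
    mul_nonneg (mul_nonneg (mul_nonneg hc0 h1m) (by linarith : (0:ℝ) ≤ P)) hD1.le,
    mul_le_mul_of_nonneg_left hP hD1.le,
    mul_nonneg (by linarith : (0:ℝ) ≤ N - I) (by linarith : (0:ℝ) ≤ P)]
end

section
/- For all 1 ≤ i ≤ n, we have 1/2 < β_1 ≤ β_i ≤ 3/4, where β_1 = 1/2 + 5/(4λ(3n+1)). -/
set_option maxHeartbeats 1000000

theorem stmt_2 (n : ℕ) (hn : 1 ≤ n) (i : ℕ) (h1 : 1 ≤ i) (hi : i ≤ n) :
    1 / 2 < beta n 1 ∧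
    beta n 1 = 1 / 2 + 5 / (4 * (1 + 1 / (4 * (n : ℝ))) * (3 * (n : ℝ) + 1)) ∧
    beta n 1 ≤ beta n i ∧
    beta n i ≤ 3 / 4 := by
  obtain ⟨N, hNdef⟩ : ∃ N : ℝ, (n:ℝ) = N := ⟨_, rfl⟩
  have hN : (1:ℝ) ≤ N := by rw [← hNdef]; exact_mod_cast hn
  have hN0 : (0:ℝ) < N := by linarith
  have hl : (1:ℝ) < 1 + 1/(4*N) := by
    have : (0:ℝ) < 1/(4*N) := by positivity
    linarith
  obtain ⟨μ, hμdef⟩ : ∃ μ : ℝ, (1 + 1/(4*N))⁻¹ = μ := ⟨_, rfl⟩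
  have hμ0 : 0 < μ := by rw [← hμdef]; positivity
  have hμ1 : μ < 1 := by rw [← hμdef]; exact inv_lt_one_of_one_lt₀ hl
  have hμval : μ * (4*N+1) = 4*N := by
    rw [← hμdef, inv_mul_eq_div, div_eq_iff (by positivity)]
    field_simp
  have hone : (1-μ)*(4*N+1) = 1 := by linear_combination -hμval
  have hS : ∀ k : ℕ, Sseq n k = N + (4*N+1)*(1 - μ^k) := by
    intro k
    rw [Sseq, hNdef, hμdef, geom_sum_eq (ne_of_lt hμ1)]
    have hne : μ - 1 ≠ 0 := by linarith
    have h2 : (μ^k - 1)/(μ - 1) = (4*N+1)*(1-μ^k) := by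
      rw [div_eq_iff hne]
      linear_combination (μ^k - 1) * hμval
    rw [h2]
  have hbeta : ∀ k : ℕ, beta n k = 1/2 + (5*N+1-(k:ℝ))*(1-μ^k)/(3*N+k) := by
    intro k
    have hd : (0:ℝ) < 3*N + k := by positivity
    have hp : ((1:ℝ) + 1/(4*N))^k = (μ^k)⁻¹ := by
      rw [← hμdef, ← inv_pow, inv_inv]
    rw [beta, hS, hNdef, hp]
    have hxk : (0:ℝ) < μ^k := pow_pos hμ0 k
    rw [show (N - (k:ℝ)) / (μ ^ k)⁻¹ = (N - (k:ℝ)) * μ ^ k from by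
      rw [div_eq_mul_inv, inv_inv]]
    field_simp
    ring
  have h1μ : (0:ℝ) ≤ 1 - μ := by linarith
  -- second-order lower bound on 1 - μ^k
  have h2nd : ∀ k : ℕ, (k:ℝ)*(1-μ) - (1-μ)^2*(k:ℝ)*((k:ℝ)-1)/2 ≤ 1 - μ^k := by
    intro k
    induction k with
    | zero => simp
    | succ m ih =>
      have hmm : (0:ℝ) ≤ (m:ℝ)*((m:ℝ)-1) := by
        rcases Nat.eq_zero_or_pos m with h | h
        · simp [h]
        · have : (1:ℝ) ≤ (m:ℝ) := by exact_mod_cast h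
          nlinarith
      have h3 : μ*((m:ℝ)*(1-μ) - (1-μ)^2*(m:ℝ)*((m:ℝ)-1)/2) ≤ μ*(1-μ^m) :=
        mul_le_mul_of_nonneg_left ih hμ0.le
      have hexp : 1 - μ^(m+1) = (1-μ) + μ*(1-μ^m) := by ring
      have hstep : ((m:ℝ)+1)*(1-μ) - (1-μ)^2*((m:ℝ)+1)*(((m:ℝ)+1)-1)/2
          ≤ (1-μ) + μ*((m:ℝ)*(1-μ) - (1-μ)^2*(m:ℝ)*((m:ℝ)-1)/2) := by
        nlinarith [mul_nonneg (mul_nonneg (mul_nonneg h1μ h1μ) h1μ) hmm]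
      push_cast
      rw [hexp]
      push_cast at hstep
      linarith
  -- Bernoulli lower bound on μ^k
  have hbern : ∀ k : ℕ, 1 - (k:ℝ)*(1-μ) ≤ μ^k := by
    intro k
    have hb := one_add_mul_le_pow (show (-2:ℝ) ≤ μ - 1 by linarith) k
    have h1 : (1:ℝ) + (μ-1) = μ := by ring
    rw [h1] at hb
    linarith
  obtain ⟨I, hIdef⟩ : ∃ I : ℝ, (i:ℝ) = I := ⟨_, rfl⟩
  have hI1 : (1:ℝ) ≤ I := by rw [← hIdef]; exact_mod_cast h1
  have hIN : I ≤ N := by rw [← hIdef, ← hNdef]; exact_mod_cast hi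
  obtain ⟨x, hxdef⟩ : ∃ x : ℝ, μ^i = x := ⟨_, rfl⟩
  have hx1 : x ≤ 1 := by rw [← hxdef]; exact pow_le_one₀ hμ0.le hμ1.le
  have hd : (0:ℝ) < 3*N + I := by positivity
  have hd1 : (0:ℝ) < 3*N + 1 := by positivity
  have h5 : (0:ℝ) ≤ 5*N + 1 - I := by linarith
  have hbi : beta n i = 1/2 + (5*N+1-I)*(1-x)/(3*N+I) := by
    rw [hbeta i, hIdef, hxdef]
  have h1x' : (1 - x)*(4*N+1) ≤ I := by
    have hb := hbern i
    rw [hIdef, hxdef] at hb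
    have h2 : (1 - x) ≤ I*(1-μ) := by linarith
    have := mul_le_mul_of_nonneg_right h2 (show (0:ℝ) ≤ 4*N+1 by linarith)
    calc (1-x)*(4*N+1) ≤ I*(1-μ)*(4*N+1) := this
      _ = I := by linear_combination I * hone
  have h2x : I*(4*N+1) - I*(I-1)/2 ≤ (1 - x)*(4*N+1)^2 := by
    have hb := h2nd i
    rw [hIdef, hxdef] at hb
    have := mul_le_mul_of_nonneg_right hb (show (0:ℝ) ≤ (4*N+1)^2 by positivity)
    calc I*(4*N+1) - I*(I-1)/2
        = (I*(1-μ) - (1-μ)^2*I*(I-1)/2)*(4*N+1)^2 := by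
          linear_combination (-(I*(4*N+1)) + I*(I-1)*((1-μ)*(4*N+1)+1)/2) * hone
      _ ≤ (1 - x)*(4*N+1)^2 := this
  -- key polynomial inequality
  have hQ : 0 ≤ (3*N+1)*I^2 - (39*N^2+22*N+3)*I + 120*N^3 + 30*N^2 := by
    have hbr : 0 ≤ 39*N^2+22*N+3 - (3*N+1)*(I+N) := by
      nlinarith [mul_nonneg (show (0:ℝ) ≤ 3*N+1 by linarith) (sub_nonneg.mpr hIN)]
    nlinarith [mul_nonneg (sub_nonneg.mpr hIN) hbr, hN0, hN]
  have key : (0:ℝ) ≤ (I-1)*((3*N+1)*I^2 - (39*N^2+22*N+3)*I + 120*N^3 + 30*N^2) :=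
    mul_nonneg (by linarith) hQ
  have step1 : 10*N*(3*N+I)*(4*N+1) ≤ (3*N+1)*((5*N+1-I)*(I*(8*N+3-I))) := by
    nlinarith [key]
  have step2 : I*(8*N+3-I) ≤ 2*((1-x)*(4*N+1)^2) := by nlinarith [h2x]
  -- beta 1 closed value
  have hb1 : beta n 1 = 1/2 + 5*N*(1-μ)/(3*N+1) := by
    rw [hbeta 1]
    norm_num
  have heq : beta n 1 = 1/2 + 5/(4*(1+1/(4*N))*(3*N+1)) := by
    rw [hb1, ← hμdef]
    have h4N : (4:ℝ)*N ≠ 0 := by positivity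
    have hninv : (1:ℝ) + 1/(4*N) ≠ 0 := by positivity
    field_simp
    ring
  rw [hNdef]
  refine ⟨?_, heq, ?_, ?_⟩
  · rw [heq]
    have : 0 < 5/(4*(1+1/(4*N))*(3*N+1)) := by positivity
    linarith
  · rw [hb1, hbi]
    have hmain : 5*N*(1-μ)*(3*N+I) ≤ (5*N+1-I)*(1-x)*(3*N+1) := by
      have hc : (0:ℝ) ≤ (3*N+1)*(5*N+1-I) := by positivity
      have step3 := mul_le_mul_of_nonneg_left step2 hc
      have hL : 5*N*(1-μ)*(3*N+I)*(2*(4*N+1)^2) = 10*N*(3*N+I)*(4*N+1) := by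
        linear_combination (10*N*(3*N+I)*(4*N+1)) * hone
      have hfin : 5*N*(1-μ)*(3*N+I)*(2*(4*N+1)^2)
          ≤ (5*N+1-I)*(1-x)*(3*N+1)*(2*(4*N+1)^2) := by
        rw [hL]
        calc 10*N*(3*N+I)*(4*N+1) ≤ (3*N+1)*((5*N+1-I)*(I*(8*N+3-I))) := step1
          _ ≤ (3*N+1)*((5*N+1-I)*(2*((1-x)*(4*N+1)^2))) := by nlinarith [step3]
          _ = (5*N+1-I)*(1-x)*(3*N+1)*(2*(4*N+1)^2) := by ring
      exact le_of_mul_le_mul_right hfin (by positivity)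
    have : 5*N*(1-μ)/(3*N+1) ≤ (5*N+1-I)*(1-x)/(3*N+I) := by
      rw [div_le_div_iff₀ hd1 hd]
      linarith [hmain]
    linarith
  · rw [hbi]
    have : (5*N+1-I)*(1-x)/(3*N+I) ≤ 1/4 := by
      rw [div_le_iff₀ hd]
      nlinarith [mul_le_mul_of_nonneg_left h1x' h5,
        mul_nonneg (sub_nonneg.mpr hIN) (show (0:ℝ) ≤ 3*N - I by linarith)]
    linarith
end

section
/- For all 0 ≤ i ≤ n−1 and 1 ≤ i+1 ≤ n, S_i/(n+i) ≥ S_{i+1}/(n+i+1). -/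
theorem stmt_4 (n : ℕ) (hn : 1 ≤ n) (i : ℕ) (hi : i + 1 ≤ n) :
    Sseq n i / ((n : ℝ) + i) ≥ Sseq n (i + 1) / ((n : ℝ) + i + 1) := by
  have hn' : (1 : ℝ) ≤ n := by exact_mod_cast hn
  set r : ℝ := (1 + 1 / (4 * (n : ℝ)))⁻¹ with hr
  have h4n : (0 : ℝ) < 4 * n := by linarith
  have hr0 : 0 < r := by
    apply inv_pos.mpr; positivity
  have hr1 : r ≤ 1 := by
    rw [hr]
    apply inv_le_one_of_one_le₀
    have : 0 < 1 / (4 * (n : ℝ)) := by positivity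
    linarith
  have hkey : ((n : ℝ) + i) * r ^ i ≤ Sseq n i := by
    have hsum : (i : ℝ) * r ^ i ≤ ∑ j ∈ Finset.range i, r ^ j := by
      have := Finset.card_nsmul_le_sum (Finset.range i) (fun j => r ^ j) (r ^ i)
        (fun j hj => pow_le_pow_of_le_one hr0.le hr1
          (Finset.mem_range.mp hj).le)
      simpa [nsmul_eq_mul] using this
    have hnr : (n : ℝ) * r ^ i ≤ n := by
      have : r ^ i ≤ 1 := pow_le_one₀ hr0.le hr1
      nlinarith
    unfold Sseq
    rw [← hr]
    nlinarith
  have hSsucc : Sseq n (i + 1) = Sseq n i + r ^ i := by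
    unfold Sseq
    rw [← hr, Finset.sum_range_succ]
    ring
  have hd1 : (0 : ℝ) < (n : ℝ) + i := by positivity
  have hd2 : (0 : ℝ) < (n : ℝ) + i + 1 := by positivity
  rw [ge_iff_le, hSsucc, div_le_div_iff₀ hd2 hd1]
  nlinarith [hkey, pow_pos hr0 i]
end

section
/- For all 1 ≤ i ≤ n, β_i ≤ S_i/(n+i). -/
theorem stmt_5 (n : ℕ) (hn : 1 ≤ n) (i : ℕ) (h1 : 1 ≤ i) (hi : i ≤ n) :
    beta n i ≤ Sseq n i / ((n : ℝ) + i) := by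
  have hn' : (1 : ℝ) ≤ n := by exact_mod_cast hn
  have hi' : (i : ℝ) ≤ n := by exact_mod_cast hi
  have hi1 : (1 : ℝ) ≤ i := by exact_mod_cast h1
  have hL : (0 : ℝ) < (1 + 1 / (4 * (n : ℝ))) ^ i := by positivity
  have hD : (0 : ℝ) ≤ ((n : ℝ) - i) / (1 + 1 / (4 * (n : ℝ))) ^ i :=
    div_nonneg (by linarith) hL.le
  have hS : (n : ℝ) ≤ Sseq n i := by
    have : (0 : ℝ) ≤ ∑ j ∈ Finset.range i, ((1 + 1 / (4 * (n : ℝ)))⁻¹) ^ j := by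
      apply Finset.sum_nonneg
      intro j _
      positivity
    unfold Sseq; linarith
  have hA : (0 : ℝ) < 3 * (n : ℝ) + i := by linarith
  have hB : (0 : ℝ) < (n : ℝ) + i := by linarith
  unfold beta
  rw [one_div, inv_mul_eq_div, div_le_div_iff₀ hA hB]
  set D := ((n : ℝ) - i) / (1 + 1 / (4 * (n : ℝ))) ^ i with hDdef
  set S := Sseq n i with hSdef
  nlinarith [mul_nonneg hD hB.le, mul_nonneg (by linarith : (0:ℝ) ≤ 2 * (n:ℝ)) (by linarith : (0:ℝ) ≤ S - n), sq_nonneg ((n:ℝ) - i)]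
end

section
/- Let a_i and a_{i+1} be probability mass functions on {0,...,V} with CDFs A_i, A_{i+1} satisfying Σ_{j=0}^x A_{i+1}(j) ≥ Σ_{j=0}^x A_i(j) for all x. If v_i, v_{i+1} are such that A_i(v_i) = A_{i+1}(v_{i+1}) = α, then Σ_{j=0}^{v_{i+1}} j·a_{i+1}(j) ≤ Σ_{j=0}^{v_i} j·a_i(j). -/
lemma cdf_mono' (a A : ℕ → ℝ) (h0 : ∀ j, 0 ≤ a j)
    (hA : ∀ x, A x = ∑ j ∈ Finset.range (x + 1), a j) {m n : ℕ} (h : m ≤ n) :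
    A m ≤ A n := by
  rw [hA, hA]
  exact Finset.sum_le_sum_of_subset_of_nonneg
    (Finset.range_subset_range.mpr (by omega)) (fun i _ _ => h0 i)

lemma abel_sum' (a A : ℕ → ℝ)
    (hA : ∀ x, A x = ∑ j ∈ Finset.range (x + 1), a j) :
    ∀ v, ∑ j ∈ Finset.range (v + 1), (j : ℝ) * a j
      = v * A v - ∑ j ∈ Finset.range v, A j := by
  intro v
  induction v with
  | zero => simp
  | succ n ih =>
    rw [Finset.sum_range_succ, ih, Finset.sum_range_succ (f := A)]
    have h : A (n + 1) = A n + a (n + 1) := by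
      rw [hA, hA, Finset.sum_range_succ]
    rw [h]; push_cast; ring

theorem stmt_7 (V : ℕ) (a₁ a₂ : ℕ → ℝ)
    (ha₁0 : ∀ j, 0 ≤ a₁ j) (ha₂0 : ∀ j, 0 ≤ a₂ j)
    (ha₁1 : ∑ j ∈ Finset.range (V + 1), a₁ j = 1)
    (ha₂1 : ∑ j ∈ Finset.range (V + 1), a₂ j = 1)
    (A₁ A₂ : ℕ → ℝ)
    (hA₁ : ∀ x, A₁ x = ∑ j ∈ Finset.range (x + 1), a₁ j)
    (hA₂ : ∀ x, A₂ x = ∑ j ∈ Finset.range (x + 1), a₂ j)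
    (hdom : ∀ x ≤ V, ∑ j ∈ Finset.range (x + 1), A₂ j ≥ ∑ j ∈ Finset.range (x + 1), A₁ j)
    (α : ℝ) (v₁ v₂ : ℕ) (hv₁ : v₁ ≤ V) (hv₂ : v₂ ≤ V)
    (h1 : A₁ v₁ = α) (h2 : A₂ v₂ = α) :
    ∑ j ∈ Finset.range (v₂ + 1), (j : ℝ) * a₂ j ≤
      ∑ j ∈ Finset.range (v₁ + 1), (j : ℝ) * a₁ j := by
  rw [abel_sum' a₁ A₁ hA₁ v₁, abel_sum' a₂ A₂ hA₂ v₂, h1, h2]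
  -- Step A: ∑_{j<v₂} A₁ j ≤ ∑_{j<v₂} A₂ j
  have hA' : ∑ j ∈ Finset.range v₂, A₁ j ≤ ∑ j ∈ Finset.range v₂, A₂ j := by
    rcases Nat.eq_zero_or_pos v₂ with h0 | hpos
    · simp [h0]
    · have := hdom (v₂ - 1) (by omega)
      have hv : v₂ - 1 + 1 = v₂ := by omega
      rw [hv] at this
      exact this
  have step1 : (v₂ : ℝ) * α - ∑ j ∈ Finset.range v₂, A₂ j
      ≤ (v₂ : ℝ) * α - ∑ j ∈ Finset.range v₂, A₁ j := by linarith
  refine step1.trans ?_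
  -- Step B
  rcases le_or_gt v₂ v₁ with hle | hlt
  · have hsplit : ∑ j ∈ Finset.range v₁, A₁ j
        = ∑ j ∈ Finset.range v₂, A₁ j + ∑ j ∈ Finset.Ico v₂ v₁, A₁ j := by
      rw [Finset.range_eq_Ico, Finset.range_eq_Ico]
      exact (Finset.sum_Ico_consecutive A₁ (Nat.zero_le v₂) hle).symm
    have hbound : ∑ j ∈ Finset.Ico v₂ v₁, A₁ j ≤ (v₁ - v₂ : ℕ) * α := by
      calc ∑ j ∈ Finset.Ico v₂ v₁, A₁ j ≤ ∑ j ∈ Finset.Ico v₂ v₁, α := by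
            refine Finset.sum_le_sum fun j hj => ?_
            rw [← h1]
            exact cdf_mono' a₁ A₁ ha₁0 hA₁ (le_of_lt (Finset.mem_Ico.mp hj).2)
        _ = (v₁ - v₂ : ℕ) * α := by
            rw [Finset.sum_const, Nat.card_Ico, nsmul_eq_mul]
    have hcast : ((v₁ - v₂ : ℕ) : ℝ) = (v₁ : ℝ) - v₂ := by
      rw [Nat.cast_sub hle]
    rw [hsplit]
    rw [hcast] at hbound
    linarith
  · have hle' : v₁ ≤ v₂ := hlt.le
    have hsplit : ∑ j ∈ Finset.range v₂, A₁ j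
        = ∑ j ∈ Finset.range v₁, A₁ j + ∑ j ∈ Finset.Ico v₁ v₂, A₁ j := by
      rw [Finset.range_eq_Ico, Finset.range_eq_Ico]
      exact (Finset.sum_Ico_consecutive A₁ (Nat.zero_le v₁) hle').symm
    have hbound : ((v₂ - v₁ : ℕ) : ℝ) * α ≤ ∑ j ∈ Finset.Ico v₁ v₂, A₁ j := by
      calc ((v₂ - v₁ : ℕ) : ℝ) * α = ∑ j ∈ Finset.Ico v₁ v₂, α := by
            rw [Finset.sum_const, Nat.card_Ico, nsmul_eq_mul]
        _ ≤ ∑ j ∈ Finset.Ico v₁ v₂, A₁ j := by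
            refine Finset.sum_le_sum fun j hj => ?_
            rw [← h1]
            exact cdf_mono' a₁ A₁ ha₁0 hA₁ (Finset.mem_Ico.mp hj).1
    have hcast : ((v₂ - v₁ : ℕ) : ℝ) = (v₂ : ℝ) - v₁ := by
      rw [Nat.cast_sub hle']
    rw [hsplit]
    rw [hcast] at hbound
    linarith
end

section
/- For the hard FedEx instance, R̃_{≥i}(n+i+1) − R_{≥i}(n+i+1) = (β_i − C)(2n−1) > 0, i.e., (n+1−i)(C + S_i) − β_i(n+i+1) − (n−i)(λ^{−i} + S_i) = (β_i − 1/2)(2n−1) > 0. -/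
theorem stmt_11 (n i : ℕ) (hn : 1 ≤ n) (h1 : 1 ≤ i) (hi : i ≤ n)
    (hβ : beta n i > 1 / 2) :
    ((n : ℝ) + 1 - i) * (1 / 2 + Sseq n i)
        - beta n i * ((n : ℝ) + i + 1)
        - ((n : ℝ) - i) * (((1 + 1 / (4 * (n : ℝ))) ^ i)⁻¹ + Sseq n i)
      = (beta n i - 1 / 2) * (2 * (n : ℝ) - 1) ∧
    (beta n i - 1 / 2) * (2 * (n : ℝ) - 1) > 0 := by
  have hn1 : (1 : ℝ) ≤ n := by exact_mod_cast hn
  have hi1 : (1 : ℝ) ≤ i := by exact_mod_cast h1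
  have hD : (3 * (n : ℝ) + i) ≠ 0 := by positivity
  have hβD : beta n i * (3 * (n : ℝ) + i)
      = (3 * (n : ℝ) - i) / 2 - ((n : ℝ) - i) / (1 + 1 / (4 * (n : ℝ))) ^ i + Sseq n i := by
    unfold beta; field_simp
  constructor
  · have : ((n : ℝ) - i) / (1 + 1 / (4 * (n : ℝ))) ^ i
        = ((n : ℝ) - i) * ((1 + 1 / (4 * (n : ℝ))) ^ i)⁻¹ := by
      rw [div_eq_mul_inv]
    nlinarith [hβD, this]
  · have h2 : (0 : ℝ) < 2 * (n : ℝ) - 1 := by linarith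
    have hb : beta n i - 1 / 2 > 0 := by linarith
    positivity
end

section
/- For the hard FedEx instance and any 1 ≤ i ≤ n and any real x > 3n+i, R_{≥i}(3n+i) − R_{≥i}(x) > n, where R_{≥i}(3n+i) ≥ β_i(3n+i) + (n−i)(C(2n−1) + S_i) and R_{≥i}(x) ≤ (n−i)(2nC + S_i) for x > 3n+i+1 (with C = 1/2). -/
theorem stmt_12 (n i : ℕ) (hn : 1 ≤ n) (h1 : 1 ≤ i) (hi : i ≤ n)
    (R : ℝ → ℝ) (x : ℝ) (hx : x > 3 * (n : ℝ) + i)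
    (hR1 : R (3 * (n : ℝ) + i) ≥
      beta n i * (3 * (n : ℝ) + i)
        + ((n : ℝ) - i) * ((1 / 2) * (2 * (n : ℝ) - 1) + Sseq n i))
    (hR2 : R x ≤ ((n : ℝ) - i) * (2 * (n : ℝ) * (1 / 2) + Sseq n i))
    (hβ : beta n i > 1 / 2) :
    R (3 * (n : ℝ) + i) - R x > n := by
  have hi1 : (1:ℝ) ≤ i := by exact_mod_cast h1
  have hn1 : (1:ℝ) ≤ n := by exact_mod_cast hn
  have hpos : (0:ℝ) < 3 * (n : ℝ) + i := by linarith
  nlinarith [mul_lt_mul_of_pos_right hβ hpos]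
end

section
/- For the hard FedEx instance with n/4 ≤ i, at any integer point x in [n+1, n+i] not among the breakpoints used by a polygon approximation S of R̃_{≥i+1}: the midpoint value satisfies (1/2)(R̃_{≥i+1}(x−1) + R̃_{≥i+1}(x+1)) = R̃_{≥i+1}(x) − ((n−i)/2)·(λ−1)/λ^{x−n}, and hence R̃_{≥i+1}(x) − S(x) ≥ 3(n−i)/(32n) whenever S(x) ≤ (1/2)(R̃_{≥i+1}(x−1) + R̃_{≥i+1}(x+1)). -/
set_option maxHeartbeats 1000000 in
theorem stmt_16 (n i : ℕ) (hn : 1 ≤ n) (hi1 : n ≤ 4 * i) (hi2 : 2 * i ≤ n)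
    (Rt : ℕ → ℝ)
    (hRt : ∀ k ≤ i + 1, Rt (n + k) = ((n : ℝ) - i) * Sseq n k)
    (x : ℕ) (hx1 : n + 1 ≤ x) (hx2 : x ≤ n + i) :
    (1 / 2) * (Rt (x - 1) + Rt (x + 1))
      = Rt x - (((n : ℝ) - i) / 2) * ((1 + 1 / (4 * (n : ℝ))) - 1)
          / (1 + 1 / (4 * (n : ℝ))) ^ (x - n) ∧
    ∀ Sx : ℝ, Sx ≤ (1 / 2) * (Rt (x - 1) + Rt (x + 1)) →
      Rt x - Sx ≥ 3 * ((n : ℝ) - i) / (32 * (n : ℝ)) := by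
  obtain ⟨t, ht⟩ : ∃ t : ℝ, 1 / (4 * (n : ℝ)) = t := ⟨_, rfl⟩
  rw [ht]
  have hnr : (0 : ℝ) < n := by exact_mod_cast hn
  have hnr1 : (1 : ℝ) ≤ n := by exact_mod_cast hn
  have ht0 : 0 < t := by rw [← ht]; positivity
  have ht4 : t ≤ 1 / 4 := by
    rw [← ht, div_le_div_iff₀ (by positivity) (by norm_num)]
    linarith
  have hA : (0 : ℝ) < 1 + t := by linarith
  -- k := x - n
  obtain ⟨k, hk⟩ : ∃ k, x = n + k := ⟨x - n, by omega⟩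
  have hk1 : 1 ≤ k := by omega
  have hki : k ≤ i := by omega
  have hxn : x - n = k := by omega
  have hxm : x - 1 = n + (k - 1) := by omega
  have hxp : x + 1 = n + (k + 1) := by omega
  have h0 : Rt x = ((n : ℝ) - i) * Sseq n k := by rw [hk]; exact hRt k (by omega)
  have hm : Rt (x - 1) = ((n : ℝ) - i) * Sseq n (k - 1) := by
    rw [hxm]; exact hRt (k - 1) (by omega)
  have hp : Rt (x + 1) = ((n : ℝ) - i) * Sseq n (k + 1) := by
    rw [hxp]; exact hRt (k + 1) (by omega)
  have hSp : Sseq n (k + 1) = Sseq n k + ((1 + t)⁻¹) ^ k := by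
    simp [Sseq, Finset.sum_range_succ, ht]; ring
  have hSm : Sseq n k = Sseq n (k - 1) + ((1 + t)⁻¹) ^ (k - 1) := by
    conv_lhs => rw [show k = (k - 1) + 1 by omega]
    simp [Sseq, Finset.sum_range_succ, ht]; ring
  have hpowk : ((1 + t)⁻¹) ^ (k - 1) = ((1 + t)⁻¹) ^ k * (1 + t) := by
    rw [show k = (k - 1) + 1 by omega, pow_succ]
    field_simp
    simp
  have hmain : (1 / 2) * (Rt (x - 1) + Rt (x + 1))
      = Rt x - (((n : ℝ) - i) / 2) * ((1 + t) - 1) / (1 + t) ^ (x - n) := by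
    rw [h0, hm, hp, hxn, hSp, hSm, hpowk, inv_pow]
    have hAk : (0 : ℝ) < (1 + t) ^ k := by positivity
    field_simp
    ring
  refine ⟨hmain, ?_⟩
  intro Sx hSx
  rw [hmain] at hSx
  -- bound: (1+t)^k ≤ 4/3
  have hkt : (k : ℝ) * t ≤ 1 / 8 := by
    have h2k : (2 * k : ℝ) ≤ n := by exact_mod_cast (by omega : 2 * k ≤ n)
    rw [← ht, mul_one_div, div_le_div_iff₀ (by positivity) (by norm_num)]
    linarith
  have hbern : 1 - (k : ℝ) * t ≤ (1 - t) ^ k := by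
    have := one_add_mul_le_pow (a := -t) (by linarith) k
    rw [← sub_eq_add_neg] at this; linarith
  have h78 : (7 : ℝ) / 8 ≤ (1 - t) ^ k := by linarith
  have hprod : (1 + t) ^ k * (1 - t) ^ k ≤ 1 := by
    rw [← mul_pow]
    calc ((1 + t) * (1 - t)) ^ k = (1 - t ^ 2) ^ k := by ring_nf
      _ ≤ 1 ^ k := by
          apply pow_le_pow_left₀ (by nlinarith) (by nlinarith)
      _ = 1 := one_pow k
  have hAk43 : (1 + t) ^ k ≤ 4 / 3 := by
    have hP := pow_pos hA k
    have h2 := mul_le_mul_of_nonneg_left h78 (le_of_lt hP)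
    linarith
  have hAkpos : (0 : ℝ) < (1 + t) ^ k := by positivity
  have hni : (0 : ℝ) ≤ (n : ℝ) - i := by
    have : (i : ℝ) ≤ n := by exact_mod_cast (by omega : i ≤ n)
    linarith
  have hgap : 3 * ((n : ℝ) - i) / (32 * (n : ℝ))
      ≤ (((n : ℝ) - i) / 2) * ((1 + t) - 1) / (1 + t) ^ (x - n) := by
    rw [hxn, show ((1 + t) - 1) = t by ring]
    have heq : 3 * ((n : ℝ) - i) / (32 * (n : ℝ)) = (3 / 4) * (((n : ℝ) - i) / 2 * t) := by
      rw [← ht]; field_simp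
      ring
    have hinv : (3 : ℝ) / 4 ≤ ((1 + t) ^ k)⁻¹ := by
      rw [show (3 : ℝ) / 4 = (4 / 3)⁻¹ by norm_num]
      exact inv_anti₀ hAkpos hAk43
    have hq : (0 : ℝ) ≤ ((n : ℝ) - i) / 2 * t := by
      exact mul_nonneg (by linarith) ht0.le
    have h3 := mul_le_mul_of_nonneg_left hinv hq
    have h4 : ((n : ℝ) - i) / 2 * t / (1 + t) ^ k
        = ((n : ℝ) - i) / 2 * t * ((1 + t) ^ k)⁻¹ := div_eq_mul_inv _ _
    rw [heq, h4]
    linarith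
  linarith
end

section
/- For any pmf a on {0,...,V} with a(n+i) = 0 and mean Σ_j j·a(j) ≤ x for n+i ≤ x ≤ 3n+i−1/2, if S is a concave function with S ≥ R_{≥i} on {0,...,5n}∖{n+i}, S increasing below 3n+i, and S given on [n+i−1, 3n+i] by the chord of R̃_{≥i} joining (n+i−1, R̃_{≥i}(n+i−1)) and (3n+i, R̃_{≥i}(3n+i)), then Σ_j a(j)·R_{≥i}(j) ≤ R̃_{≥i}(x) − ((n+1−i)/(2n+1))·(3n+i−x)·(1/λ^{i−1} − 1/2). -/
theorem stmt_17 (n i : ℕ) (hn : 1 ≤ n) (hi1 : 1 ≤ i) (hi2 : i ≤ n)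
    (a : ℕ → ℝ) (ha0 : ∀ j, 0 ≤ a j)
    (ha1 : ∑ j ∈ Finset.range (5 * n + 1), a j = 1)
    (hai : a (n + i) = 0)
    (x : ℝ) (hx1 : (n : ℝ) + i ≤ x) (hx2 : x ≤ 3 * (n : ℝ) + i - 1 / 2)
    (hmean : ∑ j ∈ Finset.range (5 * n + 1), (j : ℝ) * a j ≤ x)
    (R : ℕ → ℝ) (S : ℝ → ℝ)
    (hconc : ConcaveOn ℝ (Set.Icc (0 : ℝ) (5 * (n : ℝ))) S)
    (hSR : ∀ j ≤ 5 * n, j ≠ n + i → R j ≤ S j)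
    (hmono : MonotoneOn S (Set.Icc (0 : ℝ) (3 * (n : ℝ) + i)))
    (hchord : ∀ y ∈ Set.Icc ((n : ℝ) + i - 1) (3 * (n : ℝ) + i),
      S y = ((n : ℝ) + 1 - i) * Sseq n (i - 1)
        + (y - ((n : ℝ) + i - 1)) / (2 * (n : ℝ) + 1)
          * (((n : ℝ) + 1 - i) * ((n : ℝ) + Sseq n i)
            - ((n : ℝ) + 1 - i) * Sseq n (i - 1))) :
    ∑ j ∈ Finset.range (5 * n + 1), a j * R j
      ≤ ((n : ℝ) + 1 - i) * ((1 / 2) * (x - (n : ℝ) - i) + Sseq n i)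
        - (((n : ℝ) + 1 - i) / (2 * (n : ℝ) + 1)) * (3 * (n : ℝ) + i - x)
          * (1 / (1 + 1 / (4 * (n : ℝ))) ^ (i - 1) - 1 / 2) := by
  have hn' : (1:ℝ) ≤ (n:ℝ) := by exact_mod_cast hn
  have hi1' : (1:ℝ) ≤ (i:ℝ) := by exact_mod_cast hi1
  have hi2' : (i:ℝ) ≤ (n:ℝ) := by exact_mod_cast hi2
  set μ := ∑ j ∈ Finset.range (5 * n + 1), (j : ℝ) * a j with hμ
  have hμ0 : 0 ≤ μ :=
    Finset.sum_nonneg fun j _ => mul_nonneg (Nat.cast_nonneg j) (ha0 j)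
  -- step 1
  have step1 : ∑ j ∈ Finset.range (5 * n + 1), a j * R j
      ≤ ∑ j ∈ Finset.range (5 * n + 1), a j * S j := by
    apply Finset.sum_le_sum
    intro j hj
    rcases eq_or_ne j (n + i) with h | h
    · simp [h, hai]
    · exact mul_le_mul_of_nonneg_left
        (hSR j (Nat.lt_succ_iff.mp (Finset.mem_range.mp hj)) h) (ha0 j)
  -- step 2 : Jensen
  have step2 : ∑ j ∈ Finset.range (5 * n + 1), a j * S j ≤ S μ := by
    have := hconc.le_map_sum (t := Finset.range (5 * n + 1))
      (w := a) (p := fun j => (j : ℝ)) (fun j _ => ha0 j) ha1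
      (fun j hj => by
        constructor
        · exact Nat.cast_nonneg j
        · have : (j : ℝ) ≤ (5 * n : ℕ) := by
            exact_mod_cast Nat.lt_succ_iff.mp (Finset.mem_range.mp hj)
          push_cast at this
          linarith)
    simpa [smul_eq_mul, hμ, mul_comm] using this
  -- step 3 : monotonicity
  have step3 : S μ ≤ S x := by
    apply hmono ⟨hμ0, by linarith [hmean]⟩ ⟨by linarith, by linarith⟩
    linarith [hmean]
  -- step 4 : chord value
  have hSx := hchord x ⟨by linarith, by linarith⟩
  obtain ⟨k, rfl⟩ : ∃ k, i = k + 1 := ⟨i - 1, by omega⟩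
  have hk : (k + 1 : ℕ) - 1 = k := by omega
  have hq : Sseq n (k + 1) = Sseq n k + ((1 + 1 / (4 * (n : ℝ)))⁻¹) ^ k := by
    unfold Sseq
    rw [Finset.sum_range_succ]
    ring
  rw [hk] at hSx ⊢
  set q : ℝ := ((1 + 1 / (4 * (n : ℝ)))⁻¹) ^ k with hqdef
  have hq1 : 1 / (1 + 1 / (4 * (n : ℝ))) ^ k = q := by
    rw [hqdef, inv_pow, one_div]
  have hden : 2 * (n : ℝ) + 1 ≠ 0 := by positivity
  have hfinal : S x
      = ((n : ℝ) + 1 - (↑(k + 1) : ℝ)) * ((1 / 2) * (x - (n : ℝ) - (↑(k + 1) : ℝ)) + Sseq n (k + 1))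
        - (((n : ℝ) + 1 - (↑(k + 1) : ℝ)) / (2 * (n : ℝ) + 1)) * (3 * (n : ℝ) + (↑(k + 1) : ℝ) - x)
          * (1 / (1 + 1 / (4 * (n : ℝ))) ^ k - 1 / 2) := by
    rw [hSx, hq, hq1]
    field_simp
    ring
  linarith [step1, step2, step3, hfinal.le, hfinal.ge]
end
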